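/- For each integer α ≥ 3, the function β ↦ t_S(α,β) is continuous on the interval [0,∞). -/

import Mathlib

/-- `ŝ(α,β) = ⌊√((2β + α + 1)/(4α))⌋`. -/
noncomputable def sHat (α : ℤ) (β : ℝ) : ℤ :=
  ⌊Real.sqrt ((2 * β + (α : ℝ) + 1) / (4 * (α : ℝ)))⌋

/-- `t_S(α,β) = 1 + α·ŝ(α,β) + (β + 1/2)/(2ŝ(α,β) + 1) - 1/2`, the continuous variant of the
PSD-throttling number of the balanced spider `T_{α,β}`. -/
noncomputable def tS (α : ℤ) (β : ℝ) : ℝ :=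
  1 + (α : ℝ) * (sHat α β : ℝ) + (β + 1 / 2) / (2 * (sHat α β : ℝ) + 1) - 1 / 2

/-- `t_P(α,β) = √(2(αβ + 1) + 1/4) - 1/2`, the continuous variant of the PSD-throttling
number of the path on `αβ + 1` vertices. -/
noncomputable def tP (α : ℤ) (β : ℝ) : ℝ :=
  Real.sqrt (2 * ((α : ℝ) * β + 1) + 1 / 4) - 1 / 2

/-- For each integer `α ≥ 3`, the function `β ↦ t_S(α,β)` is continuous on `[0,∞)`. -/
theorem stmt11 (α : ℤ) (hα : 3 ≤ α) :
    ContinuousOn (fun β : ℝ => tS α β) (Set.Ici (0 : ℝ)) := by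
  have hαR : (3:ℝ) ≤ (α:ℝ) := by exact_mod_cast hα
  have hα0 : (0:ℝ) < (α:ℝ) := by linarith
  set g : ℝ → ℝ := fun β => Real.sqrt ((2 * β + (α:ℝ) + 1) / (4 * (α:ℝ))) with hg_def
  have hgc : Continuous g := by
    apply Real.continuous_sqrt.comp
    fun_prop
  have hfloor : ∀ β, sHat α β = ⌊g β⌋ := fun β => rfl
  have hmono : Monotone g := by
    intro a b hab
    apply Real.sqrt_le_sqrt
    gcongr
  intro β₀ hβ₀
  have hβ₀0 : (0:ℝ) ≤ β₀ := hβ₀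
  set x₀ := g β₀ with hx₀def
  set n₀ := ⌊x₀⌋ with hn₀def
  have hx₀nn : 0 ≤ x₀ := Real.sqrt_nonneg _
  have hxhalf : (1/2 : ℝ) < x₀ := by
    rw [hx₀def, hg_def]
    rw [Real.lt_sqrt (by norm_num)]
    rw [lt_div_iff₀ (by positivity)]
    nlinarith
  have hn₀0 : (0:ℤ) ≤ n₀ := Int.le_floor.mpr (by exact_mod_cast hx₀nn)
  have hs0 : sHat α β₀ = n₀ := hfloor β₀
  rcases lt_or_eq_of_le (Int.floor_le x₀) with hlt | heq
  · -- non-integer point: floor locally constant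
    have hopen : IsOpen (g ⁻¹' Set.Ioo ((n₀:ℝ)) (n₀+1)) := isOpen_Ioo.preimage hgc
    have hmem : β₀ ∈ g ⁻¹' Set.Ioo ((n₀:ℝ)) (n₀+1) :=
      ⟨hlt, Int.lt_floor_add_one x₀⟩
    have hev : (fun β => tS α β) =ᶠ[nhds β₀]
        (fun β => 1 + (α:ℝ) * (n₀:ℝ) + (β + 1/2) / (2*(n₀:ℝ)+1) - 1/2) := by
      filter_upwards [hopen.mem_nhds hmem] with β hβ
      have hfl : sHat α β = n₀ := by
        rw [hfloor, Int.floor_eq_iff]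
        exact ⟨hβ.1.le, hβ.2⟩
      simp [tS, hfl]
    have hc : ContinuousAt
        (fun β : ℝ => 1 + (α:ℝ) * (n₀:ℝ) + (β + 1/2) / (2*(n₀:ℝ)+1) - 1/2) β₀ := by
      fun_prop
    exact (hc.congr hev.symm).continuousWithinAt
  · -- integer point: left and right pieces agree
    have hn₀1 : (1:ℤ) ≤ n₀ := by
      have : (0:ℝ) < (n₀:ℝ) := by rw [heq]; linarith
      exact_mod_cast this
    have hn₀R : (1:ℝ) ≤ (n₀:ℝ) := by exact_mod_cast hn₀1
    have harg_nn : (0:ℝ) ≤ (2 * β₀ + (α:ℝ) + 1) / (4 * (α:ℝ)) := by positivity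
    have hsq : (2 * β₀ + (α:ℝ) + 1) / (4 * (α:ℝ)) = (n₀:ℝ)^2 := by
      have h1 : x₀ ^ 2 = (2 * β₀ + (α:ℝ) + 1) / (4 * (α:ℝ)) := Real.sq_sqrt harg_nn
      rw [← h1, ← heq]
    have hkey : 2 * β₀ + 1 = (α:ℝ) * (4 * (n₀:ℝ)^2 - 1) := by
      field_simp at hsq
      linarith
    have hd1 : (2*(n₀:ℝ)+1) ≠ 0 := by positivity
    have hd2 : (2*((n₀:ℝ)-1)+1) ≠ 0 := by nlinarith
    have hIdent :
        1 + (α:ℝ) * ((n₀:ℝ)-1) + (β₀ + 1/2) / (2*((n₀:ℝ)-1)+1) - 1/2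
          = 1 + (α:ℝ) * (n₀:ℝ) + (β₀ + 1/2) / (2*(n₀:ℝ)+1) - 1/2 := by
      have e1 : (β₀ + 1/2) / (2*((n₀:ℝ)-1)+1) = (α:ℝ)*(2*(n₀:ℝ)+1)/2 := by
        rw [div_eq_iff hd2]; linear_combination hkey/2
      have e2 : (β₀ + 1/2) / (2*(n₀:ℝ)+1) = (α:ℝ)*(2*(n₀:ℝ)-1)/2 := by
        rw [div_eq_iff hd1]; linear_combination hkey/2
      rw [e1, e2]; ring
    have hval : tS α β₀ = 1 + (α:ℝ) * (n₀:ℝ) + (β₀ + 1/2) / (2*(n₀:ℝ)+1) - 1/2 := by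
      simp [tS, hs0]
    -- right continuity
    have hR : ContinuousWithinAt (fun β => tS α β) (Set.Ici β₀) β₀ := by
      have hopen : IsOpen (g ⁻¹' Set.Iio ((n₀:ℝ)+1)) := isOpen_Iio.preimage hgc
      have hmem : β₀ ∈ g ⁻¹' Set.Iio ((n₀:ℝ)+1) := by
        show g β₀ < (n₀:ℝ)+1
        rw [← hx₀def, ← heq]; linarith
      have hc : ContinuousWithinAt
          (fun β : ℝ => 1 + (α:ℝ) * (n₀:ℝ) + (β + 1/2) / (2*(n₀:ℝ)+1) - 1/2)
          (Set.Ici β₀) β₀ := by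
        apply Continuous.continuousWithinAt; fun_prop
      apply hc.congr_of_eventuallyEq _ hval
      filter_upwards [nhdsWithin_le_nhds (hopen.mem_nhds hmem), self_mem_nhdsWithin]
        with β h1 h2
      have hfl : sHat α β = n₀ := by
        rw [hfloor, Int.floor_eq_iff]
        constructor
        · rw [heq]; exact hmono h2
        · exact h1
      simp [tS, hfl]
    -- left continuity
    have hL : ContinuousWithinAt (fun β => tS α β) (Set.Iic β₀) β₀ := by
      have hopen : IsOpen (g ⁻¹' Set.Ioi ((n₀:ℝ)-1)) := isOpen_Ioi.preimage hgc
      have hmem : β₀ ∈ g ⁻¹' Set.Ioi ((n₀:ℝ)-1) := by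
        show (n₀:ℝ)-1 < g β₀
        rw [← hx₀def, ← heq]; linarith
      have hc : ContinuousWithinAt
          (fun β : ℝ => 1 + (α:ℝ) * ((n₀:ℝ)-1) + (β + 1/2) / (2*((n₀:ℝ)-1)+1) - 1/2)
          (Set.Iic β₀) β₀ := by
        apply Continuous.continuousWithinAt; fun_prop
      apply hc.congr_of_eventuallyEq _ (by rw [hval, ← hIdent])
      filter_upwards [nhdsWithin_le_nhds (hopen.mem_nhds hmem), self_mem_nhdsWithin]
        with β h1 h2
      rcases lt_or_eq_of_le (show β ≤ β₀ from h2) with hblt | hbeq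
      · have hfl : sHat α β = n₀ - 1 := by
          rw [hfloor, Int.floor_eq_iff]
          constructor
          · push_cast; exact h1.le
          · push_cast
            have hargs : (2 * β + (α:ℝ) + 1) / (4 * (α:ℝ)) < (n₀:ℝ)^2 := by
              rw [← hsq]
              gcongr
            have := (Real.sqrt_lt' (show (0:ℝ) < (n₀:ℝ) by linarith)).mpr hargs
            show g β < (n₀:ℝ) - 1 + 1
            rw [hg_def]
            simpa using this
        simp [tS, hfl]
      · rw [hbeq, hval, ← hIdent]
    have hU := hL.union hR
    rw [Set.Iic_union_Ici] at hU
    exact ((continuousWithinAt_univ _ _).mp hU).continuousWithinAt
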